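/- Let β, γ > 0 with β < 1 and α₁, α₂ < 0, and let η be the finite signed measure η(dv) = α₁ δ₀(dv) + (α₂/Γ(β)) v^{β−1} e^{−γv} 1_{(0,∞)}(v) dv. Then for every z ∈ ℂ with Re(z) ≤ 0, the principal-branch power (γ − z)^{−β} has strictly positive real part, and consequently h(z) = −z − α₁ − α₂ (γ − z)^{−β} ≠ 0 for all such z. -/

import Mathlib

open MeasureTheory Complex Set
open scoped ENNReal Real Topology
open Metric

lemma intOn_real {β b : ℝ} (hβ : 0 < β) (hb : 0 < b) :
    IntegrableOn (fun t : ℝ => t ^ (β - 1) * Real.exp (-b * t)) (Ioi 0) := by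
  have := integrableOn_rpow_mul_exp_neg_mul_rpow (by linarith : (-1:ℝ) < β - 1)
    zero_lt_one hb
  simpa [Real.rpow_one] using this

lemma aesm_cpow_exp {β : ℝ} (w : ℂ) :
    AEStronglyMeasurable (fun t : ℝ => (t:ℂ) ^ ((β:ℂ) - 1) * Complex.exp (-(w * t)))
      (volume.restrict (Ioi (0:ℝ))) := by
  apply ContinuousOn.aestronglyMeasurable ?_ measurableSet_Ioi
  apply ContinuousOn.mul
  · intro t ht
    exact (Complex.continuousAt_ofReal_cpow_const t _ (Or.inr (ne_of_gt ht))).continuousWithinAt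
  · exact (Complex.continuous_exp.comp
      ((continuous_const.mul Complex.continuous_ofReal).neg)).continuousOn

lemma intOn_complex {β : ℝ} (hβ : 0 < β) {w : ℂ} (hw : 0 < w.re) :
    IntegrableOn (fun t : ℝ => (t:ℂ) ^ ((β:ℂ) - 1) * Complex.exp (-(w * t))) (Ioi 0) := by
  refine (intOn_real hβ hw).mono' (aesm_cpow_exp w) ?_
  filter_upwards [ae_restrict_mem measurableSet_Ioi] with t ht
  rw [mem_Ioi] at ht
  rw [norm_mul,
    Complex.norm_cpow_eq_rpow_re_of_pos ht, Complex.norm_exp]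
  norm_num [neg_mul]

lemma hasDerivAt_F {β : ℝ} (hβ : 0 < β) {w₀ : ℂ} (hw₀ : 0 < w₀.re) :
    HasDerivAt (fun w : ℂ => ∫ t in Ioi (0:ℝ), (t:ℂ) ^ ((β:ℂ) - 1) * Complex.exp (-(w * t)))
      (∫ t in Ioi (0:ℝ), (t:ℂ) ^ ((β:ℂ) - 1) * (Complex.exp (-(w₀ * t)) * (-(t:ℂ)))) w₀ := by
  set ε := w₀.re / 2 with hε
  have hεpos : 0 < ε := by positivity
  have key := hasDerivAt_integral_of_dominated_loc_of_deriv_le (μ := volume.restrict (Ioi (0:ℝ)))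
    (F := fun (w : ℂ) (t : ℝ) => (t:ℂ) ^ ((β:ℂ) - 1) * Complex.exp (-(w * t)))
    (F' := fun (w : ℂ) (t : ℝ) => (t:ℂ) ^ ((β:ℂ) - 1) * (Complex.exp (-(w * t)) * (-(t:ℂ))))
    (x₀ := w₀) (bound := fun t : ℝ => t ^ β * Real.exp (-ε * t)) (ball_mem_nhds w₀ hεpos)
    ?_ ?_ ?_ ?_ ?_ ?_
  · exact key.2
  · filter_upwards with w; exact aesm_cpow_exp w
  · exact intOn_complex hβ hw₀
  · exact ((aesm_cpow_exp w₀).mul (Complex.continuous_ofReal.neg.aestronglyMeasurable)).congr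
      (by filter_upwards with t; simp [Pi.mul_apply]; ring)
  · filter_upwards [ae_restrict_mem measurableSet_Ioi] with t ht w hw
    rw [mem_Ioi] at ht
    have hwre : ε ≤ w.re := by
      have h1 : |(w - w₀).re| ≤ ‖w - w₀‖ := Complex.abs_re_le_norm _
      have h2 : ‖w - w₀‖ < ε := by
        simpa [Complex.dist_eq] using mem_ball.mp hw
      have := abs_le.mp (le_of_lt (lt_of_le_of_lt h1 h2))
      simp only [Complex.sub_re] at this
      linarith [this.1]
    rw [norm_mul, norm_mul,
      Complex.norm_cpow_eq_rpow_re_of_pos ht, Complex.norm_exp]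
    simp only [Complex.sub_re, Complex.neg_re, Complex.mul_re, Complex.ofReal_re,
      Complex.ofReal_im, Complex.one_re, mul_zero, sub_zero, norm_neg, Complex.norm_real, Real.norm_eq_abs,
      abs_of_pos ht]
    have hrw : t ^ (β - 1) * Real.exp (-(w.re * t)) * t = t ^ β * Real.exp (-(w.re * t)) := by
      rw [mul_right_comm, ← Real.rpow_add_one (ne_of_gt ht)]
      ring_nf
    rw [← mul_assoc, hrw]
    have hle : Real.exp (-(w.re * t)) ≤ Real.exp (-ε * t) := by
      apply Real.exp_le_exp.mpr; nlinarith
    have h1 : (0:ℝ) ≤ t ^ β := Real.rpow_nonneg ht.le _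
    nlinarith
  · have := integrableOn_rpow_mul_exp_neg_mul_rpow (by linarith : (-1:ℝ) < β)
      zero_lt_one hεpos
    simpa [Real.rpow_one, IntegrableOn] using this
  · filter_upwards with t w _
    have h1 : HasDerivAt (fun w : ℂ => -(w * t)) (-(t:ℂ)) w := by
      exact (hasDerivAt_mul_const (t:ℂ)).neg
    exact (h1.cexp).const_mul _

lemma laplace_gamma {β : ℝ} (hβ : 0 < β) {w : ℂ} (hw : 0 < w.re) :
    ∫ t in Ioi (0:ℝ), (t:ℂ) ^ ((β:ℂ) - 1) * Complex.exp (-(w * t))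
      = Complex.Gamma β * w ^ (-(β:ℂ)) := by
  set U : Set ℂ := {z : ℂ | 0 < z.re} with hU
  have hUopen : IsOpen U := isOpen_lt continuous_const Complex.continuous_re
  have hUconn : IsPreconnected U := (convex_halfSpace_re_gt 0).isPreconnected
  set F : ℂ → ℂ := fun z => ∫ t in Ioi (0:ℝ), (t:ℂ) ^ ((β:ℂ) - 1) * Complex.exp (-(z * t))
  set G : ℂ → ℂ := fun z => Complex.Gamma β * z ^ (-(β:ℂ))
  have hF : AnalyticOnNhd ℂ F U := by
    apply DifferentiableOn.analyticOnNhd ?_ hUopen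
    intro z hz
    exact ((hasDerivAt_F hβ hz).differentiableAt).differentiableWithinAt
  have hG : AnalyticOnNhd ℂ G U := by
    apply DifferentiableOn.analyticOnNhd ?_ hUopen
    intro z hz
    exact ((differentiableAt_id.cpow (differentiableAt_const _)
      (Or.inl hz)).const_mul _).differentiableWithinAt
  have h1U : (1:ℂ) ∈ U := by simp [hU]
  have hfreq : ∃ᶠ z in nhdsWithin (1:ℂ) {(1:ℂ)}ᶜ, F z = G z := by
    have htend : Filter.Tendsto (fun n : ℕ => ((1 + (n+1:ℝ)⁻¹ : ℝ) : ℂ)) Filter.atTop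
        (nhdsWithin (1:ℂ) {(1:ℂ)}ᶜ) := by
      apply tendsto_nhdsWithin_of_tendsto_nhds_of_eventually_within
      · have : Filter.Tendsto (fun n : ℕ => (1 + (n+1:ℝ)⁻¹ : ℝ)) Filter.atTop (nhds 1) := by
          simpa using tendsto_const_nhds.add (tendsto_one_div_add_atTop_nhds_zero_nat (𝕜 := ℝ))
        have := (Complex.continuous_ofReal.tendsto (1:ℝ)).comp this
        exact Complex.ofReal_one ▸ this
      · filter_upwards with n
        simp only [Set.mem_compl_iff, Set.mem_singleton_iff]
        intro h
        have : (1 + (n+1:ℝ)⁻¹ : ℝ) = 1 := by exact_mod_cast h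
        have hpos : (0:ℝ) < (n+1:ℝ)⁻¹ := by positivity
        linarith
    apply htend.frequently
    apply Filter.Frequently.of_forall
    intro n
    have hr : (0:ℝ) < 1 + (n+1:ℝ)⁻¹ := by positivity
    set r : ℝ := 1 + (n+1:ℝ)⁻¹
    have key := Complex.integral_cpow_mul_exp_neg_mul_Ioi (a := (β:ℂ))
      (by simpa using hβ) hr
    have hFr : F r = (1 / (r:ℂ)) ^ (β:ℂ) * Complex.Gamma β := by
      rw [← key]
    rw [hFr]
    have : (1 / (r:ℂ)) ^ (β:ℂ) = (r:ℂ) ^ (-(β:ℂ)) := by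
      have harg : (r:ℂ).arg ≠ Real.pi := by
        rw [Complex.arg_ofReal_of_nonneg hr.le]; exact Real.pi_ne_zero.symm
      rw [one_div, Complex.cpow_neg, ← Complex.inv_cpow _ _ harg]
    rw [this, mul_comm]
  have := hF.eqOn_of_preconnected_of_frequently_eq hG hUconn h1U hfreq
  exact this hw

/-- `h(z) = -z - ∫_{[0,∞)} e^{zv} dη(v)` for the gamma-type delay measure
`η(dv) = α₁ δ₀(dv) + (α₂/Γ(β)) v^{β-1} e^{-γv} 1_{(0,∞)}(v) dv`. -/
noncomputable def hGamma (α₁ α₂ β γ : ℝ) (z : ℂ) : ℂ :=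
  -z - ((α₁ : ℂ) + ∫ v in Set.Ioi (0 : ℝ),
    Complex.exp (z * v) * (((α₂ / Real.Gamma β) * v ^ (β - 1) * Real.exp (-γ * v) : ℝ) : ℂ))

/-- Example 2.10, case `β < 1`. Let `0 < β < 1`, `γ > 0` and
`α₁, α₂ < 0`. Then for every `z` with `Re z ≤ 0` the principal-branch power `(γ - z)^{-β}`
has strictly positive real part, and consequently
`h(z) = -z - α₁ - α₂ (γ - z)^{-β} ≠ 0` for all such `z`. -/
theorem statement16
    (α₁ α₂ β γ : ℝ) (hβ : 0 < β) (hβ1 : β < 1) (hγ : 0 < γ)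
    (hα₁ : α₁ < 0) (hα₂ : α₂ < 0) :
    ∀ z : ℂ, z.re ≤ 0 →
      0 < (((γ : ℂ) - z) ^ (-β : ℂ)).re ∧
      hGamma α₁ α₂ β γ z = -z - (α₁ : ℂ) - (α₂ : ℂ) * ((γ : ℂ) - z) ^ (-β : ℂ) ∧
      hGamma α₁ α₂ β γ z ≠ 0 := by
  intro z hz
  set w : ℂ := (γ : ℂ) - z with hw
  have hwre : 0 < w.re := by
    simp only [hw, Complex.sub_re, Complex.ofReal_re]
    linarith
  have hwne : w ≠ 0 := fun h => by simp [h] at hwre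
  -- Part 1: positivity of real part
  have hre : 0 < (w ^ (-β : ℂ)).re := by
    rw [Complex.cpow_def_of_ne_zero hwne, Complex.exp_re]
    apply mul_pos (Real.exp_pos _)
    apply Real.cos_pos_of_mem_Ioo
    have harg : |w.arg| < Real.pi / 2 := Complex.abs_arg_lt_pi_div_two_iff.mpr (Or.inl hwre)
    have him : (Complex.log w * (-β : ℂ)).im = w.arg * (-β) := by
      simp [Complex.mul_im, Complex.log_im]
    rw [him]
    have habs : |w.arg * (-β)| < Real.pi / 2 := by
      rw [abs_mul, abs_neg, abs_of_pos hβ]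
      calc |w.arg| * β ≤ |w.arg| * 1 := by
            apply mul_le_mul_of_nonneg_left (le_of_lt hβ1) (abs_nonneg _)
        _ < Real.pi / 2 := by rwa [mul_one]
    constructor
    · linarith [(abs_lt.mp habs).1]
    · exact (abs_lt.mp habs).2
  have hcast : ((-β : ℝ) : ℂ) = -(β : ℂ) := by push_cast; ring
  -- Part 2: the integral identity
  have hint : (∫ v in Set.Ioi (0 : ℝ),
      Complex.exp (z * v) * (((α₂ / Real.Gamma β) * v ^ (β - 1) * Real.exp (-γ * v) : ℝ) : ℂ))
      = (α₂ : ℂ) * w ^ (-(β : ℂ)) := by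
    have hΓ : Real.Gamma β ≠ 0 := (Real.Gamma_pos_of_pos hβ).ne'
    have step1 : (∫ v in Set.Ioi (0 : ℝ),
        Complex.exp (z * v) * (((α₂ / Real.Gamma β) * v ^ (β - 1) * Real.exp (-γ * v) : ℝ) : ℂ))
        = ∫ v in Set.Ioi (0 : ℝ),
          ((α₂ / Real.Gamma β : ℝ) : ℂ) * ((v:ℂ) ^ ((β:ℂ) - 1) * Complex.exp (-(w * v))) := by
      apply MeasureTheory.setIntegral_congr_fun measurableSet_Ioi
      intro v hv
      rw [Set.mem_Ioi] at hv
      have h1 : ((v ^ (β - 1) : ℝ) : ℂ) = (v:ℂ) ^ ((β:ℂ) - 1) := by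
        rw [Complex.ofReal_cpow hv.le]; push_cast; ring_nf
      have h2 : Complex.exp (z * v) * ((Real.exp (-γ * v) : ℝ) : ℂ) = Complex.exp (-(w * v)) := by
        rw [Complex.ofReal_exp, ← Complex.exp_add, hw]
        congr 1
        push_cast
        ring
      simp only
      rw [← h2]
      push_cast [h1]
      ring
    rw [step1, MeasureTheory.integral_const_mul, laplace_gamma hβ hwre, Complex.Gamma_ofReal]
    have hΓC : (Real.Gamma β : ℂ) ≠ 0 := by exact_mod_cast hΓ
    push_cast
    field_simp
  refine ⟨hre, ?_, ?_⟩
  · rw [hGamma, hint]; ring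
  · rw [hGamma, hint]
    intro h0
    have : ((-z - ((α₁:ℂ) + (α₂:ℂ) * w ^ (-(β:ℂ))))).re = 0 := by rw [h0]; simp
    simp only [Complex.sub_re, Complex.neg_re, Complex.add_re, Complex.ofReal_re,
      Complex.re_ofReal_mul] at this
    nlinarith [hre]
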